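/- arXiv:1606.04374 — 2 statements merged into one kernel-verified Lean document; each statement's English description precedes it below -/
import Mathlib

section
/- There are no elements x, y, z of the field ℚ_3 of 3-adic numbers with (x, y, z) ≠ (0, 0, 0) such that 3x^3 + 8y^3 + 21z^3 = 0. -/
open PadicInt

private lemma zmod27_check : ∀ X Y Z : ZMod (3 ^ 3),
    3 * X ^ 3 + 8 * Y ^ 3 + 21 * Z ^ 3 = 0 →
    (∃ W, X = 3 * W) ∧ (∃ W, Y = 3 * W) ∧ (∃ W, Z = 3 * W) := by
  decide

private lemma dvd_of_zmod_dvd (x : ℤ_[3])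
    (h : (3 : ZMod (3 ^ 3)) ∣ (toZModPow 3 x : ZMod (3 ^ 3))) : (3 : ℤ_[3]) ∣ x := by
  obtain ⟨W, hW⟩ := h
  have hker : x - 3 * ((W.val : ℕ) : ℤ_[3]) ∈
      RingHom.ker (toZModPow 3 : ℤ_[3] →+* ZMod (3 ^ 3)) := by
    rw [RingHom.mem_ker, map_sub, map_mul, map_natCast, map_ofNat, ZMod.natCast_val,
      ZMod.cast_id, hW, sub_self]
  rw [ker_toZModPow, Ideal.mem_span_singleton] at hker
  obtain ⟨t, ht⟩ := hker
  exact ⟨(W.val : ℤ_[3]) + 3 ^ 2 * t, by linear_combination ht⟩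

private lemma padicint_step (x y z : ℤ_[3])
    (h : 3 * x ^ 3 + 8 * y ^ 3 + 21 * z ^ 3 = 0) :
    (3 : ℤ_[3]) ∣ x ∧ (3 : ℤ_[3]) ∣ y ∧ (3 : ℤ_[3]) ∣ z := by
  have h27 := congrArg (toZModPow 3 : ℤ_[3] →+* ZMod (3 ^ 3)) h
  simp only [map_add, map_mul, map_pow, map_ofNat, map_zero] at h27
  obtain ⟨hx, hy, hz⟩ := zmod27_check _ _ _ h27
  exact ⟨dvd_of_zmod_dvd x hx, dvd_of_zmod_dvd y hy, dvd_of_zmod_dvd z hz⟩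

private lemma padicint_descent : ∀ (n : ℕ) (x y z : ℤ_[3]),
    3 * x ^ 3 + 8 * y ^ 3 + 21 * z ^ 3 = 0 →
    (3 : ℤ_[3]) ^ n ∣ x ∧ (3 : ℤ_[3]) ^ n ∣ y ∧ (3 : ℤ_[3]) ^ n ∣ z := by
  intro n
  induction n with
  | zero => intro x y z _; simp
  | succ n ih =>
    intro x y z h
    obtain ⟨⟨x', rfl⟩, ⟨y', rfl⟩, ⟨z', rfl⟩⟩ := padicint_step x y z h
    have h' : 3 * x' ^ 3 + 8 * y' ^ 3 + 21 * z' ^ 3 = 0 := by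
      have h27 : (27 : ℤ_[3]) * (3 * x' ^ 3 + 8 * y' ^ 3 + 21 * z' ^ 3) = 0 := by
        linear_combination h
      have : (27 : ℤ_[3]) ≠ 0 := by norm_num
      exact (mul_eq_zero.mp h27).resolve_left this
    obtain ⟨hx, hy, hz⟩ := ih x' y' z' h'
    refine ⟨?_, ?_, ?_⟩ <;> rw [pow_succ']
    exacts [mul_dvd_mul_left 3 hx, mul_dvd_mul_left 3 hy, mul_dvd_mul_left 3 hz]

private lemma eq_zero_of_forall_pow_dvd (x : ℤ_[3])
    (h : ∀ n : ℕ, (3 : ℤ_[3]) ^ n ∣ x) : x = 0 := by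
  have hnorm : ∀ n : ℕ, ‖x‖ ≤ (3 : ℝ)⁻¹ ^ n := by
    intro n
    have h1 := (norm_le_pow_iff_mem_span_pow x n).mpr (Ideal.mem_span_singleton.mpr (h n))
    have h2 : ((3 : ℕ) : ℝ) ^ (-(n : ℤ)) = (3 : ℝ)⁻¹ ^ n := by
      rw [zpow_neg, ← inv_zpow, zpow_natCast]; norm_num
    rw [h2] at h1; exact h1
  by_contra hx
  have hpos : 0 < ‖x‖ := norm_pos_iff.mpr hx
  obtain ⟨n, hn⟩ := exists_pow_lt_of_lt_one hpos (by norm_num : (3 : ℝ)⁻¹ < 1)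
  linarith [hnorm n]

private lemma padicint_triv (x y z : ℤ_[3])
    (h : 3 * x ^ 3 + 8 * y ^ 3 + 21 * z ^ 3 = 0) : x = 0 ∧ y = 0 ∧ z = 0 := by
  refine ⟨eq_zero_of_forall_pow_dvd x fun n => ?_,
          eq_zero_of_forall_pow_dvd y fun n => ?_,
          eq_zero_of_forall_pow_dvd z fun n => ?_⟩
  · exact (padicint_descent n x y z h).1
  · exact (padicint_descent n x y z h).2.1
  · exact (padicint_descent n x y z h).2.2

private lemma exists_scale (q : ℚ_[3]) : ∃ N : ℕ, ∀ n ≥ N, ‖(3 : ℚ_[3]) ^ n * q‖ ≤ 1 := by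
  obtain ⟨N, hN⟩ := pow_unbounded_of_one_lt ‖q‖ (by norm_num : (1 : ℝ) < 3)
  refine ⟨N, fun n hn => ?_⟩
  have h3 : ‖(3 : ℚ_[3])‖ = (3 : ℝ)⁻¹ := by
    simpa using (Padic.norm_p (p := 3))
  rw [_root_.norm_mul, _root_.norm_pow, h3]
  have h1 : ‖q‖ ≤ (3 : ℝ) ^ n := le_trans hN.le (pow_le_pow_right₀ (by norm_num) hn)
  rw [inv_pow]
  rw [inv_mul_le_iff₀ (by positivity), mul_one]
  exact h1

theorem no_Q3_points_3_8_21 :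
    ¬ ∃ x y z : ℚ_[3], (x, y, z) ≠ (0, 0, 0) ∧
      3 * x ^ 3 + 8 * y ^ 3 + 21 * z ^ 3 = 0 := by
  rintro ⟨x, y, z, hne, heq⟩
  obtain ⟨Nx, hNx⟩ := exists_scale x
  obtain ⟨Ny, hNy⟩ := exists_scale y
  obtain ⟨Nz, hNz⟩ := exists_scale z
  set n := max Nx (max Ny Nz) with hn
  have hx1 : ‖(3 : ℚ_[3]) ^ n * x‖ ≤ 1 := hNx n (le_max_left _ _)
  have hy1 : ‖(3 : ℚ_[3]) ^ n * y‖ ≤ 1 := hNy n ((le_max_left _ _).trans (le_max_right _ _))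
  have hz1 : ‖(3 : ℚ_[3]) ^ n * z‖ ≤ 1 := hNz n ((le_max_right _ _).trans (le_max_right _ _))
  set a : ℤ_[3] := ⟨_, hx1⟩
  set b : ℤ_[3] := ⟨_, hy1⟩
  set c : ℤ_[3] := ⟨_, hz1⟩
  have habc : 3 * a ^ 3 + 8 * b ^ 3 + 21 * c ^ 3 = 0 := by
    have : ((3 * a ^ 3 + 8 * b ^ 3 + 21 * c ^ 3 : ℤ_[3]) : ℚ_[3]) = 0 := by
      push_cast
      show 3 * ((3:ℚ_[3])^n * x) ^ 3 + 8 * ((3:ℚ_[3])^n * y) ^ 3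
          + 21 * ((3:ℚ_[3])^n * z) ^ 3 = 0
      linear_combination ((3:ℚ_[3])^n)^3 * heq
    exact PadicInt.coe_eq_zero.mp this
  obtain ⟨ha, hb, hc⟩ := padicint_triv a b c habc
  have h3n : (3 : ℚ_[3]) ^ n ≠ 0 := pow_ne_zero _ (by norm_num)
  have hx0 : x = 0 := by
    have : (3 : ℚ_[3]) ^ n * x = 0 := congrArg Subtype.val ha
    exact (mul_eq_zero.mp this).resolve_left h3n
  have hy0 : y = 0 := by
    have : (3 : ℚ_[3]) ^ n * y = 0 := congrArg Subtype.val hb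
    exact (mul_eq_zero.mp this).resolve_left h3n
  have hz0 : z = 0 := by
    have : (3 : ℚ_[3]) ^ n * z = 0 := congrArg Subtype.val hc
    exact (mul_eq_zero.mp this).resolve_left h3n
  exact hne (by simp [hx0, hy0, hz0])
end

section
/- There are no elements x, y, z of the field ℚ_7 of 7-adic numbers with (x, y, z) ≠ (0, 0, 0) such that 3x^3 + 8y^3 + 21z^3 = 0. -/
instance : Fact (Nat.Prime 7) := ⟨by norm_num⟩

private lemma toZMod_zero_dvd (x : ℤ_[7]) (h : PadicInt.toZMod x = 0) : (7 : ℤ_[7]) ∣ x := by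
  have hk : x ∈ RingHom.ker (PadicInt.toZMod : ℤ_[7] →+* ZMod 7) := h
  rw [PadicInt.ker_toZMod, PadicInt.maximalIdeal_eq_span_p, Ideal.mem_span_singleton] at hk
  exact_mod_cast hk

private lemma dvd_norm_lt (x : ℤ_[7]) (h : (7 : ℤ_[7]) ∣ x) : ‖x‖ < 1 := by
  rw [PadicInt.norm_lt_one_iff_dvd]
  exact_mod_cast h

private lemma aux (X Y Z : ℤ_[7])
    (hone : ‖X‖ = 1 ∨ ‖Y‖ = 1 ∨ ‖Z‖ = 1)
    (h : 3 * X ^ 3 + 8 * Y ^ 3 + 21 * Z ^ 3 = 0) : False := by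
  have key : ∀ a b c : ZMod 7, 3 * a ^ 3 + 8 * b ^ 3 + 21 * c ^ 3 = 0 → a = 0 ∧ b = 0 := by
    decide
  have h1 := congrArg (PadicInt.toZMod : ℤ_[7] →+* ZMod 7) h
  push_cast [map_add, map_mul, map_pow, map_ofNat, map_zero] at h1
  obtain ⟨ha, hb⟩ := key _ _ _ h1
  obtain ⟨X₀, hX₀⟩ := toZMod_zero_dvd X ha
  obtain ⟨Y₀, hY₀⟩ := toZMod_zero_dvd Y hb
  have hXlt : ‖X‖ < 1 := dvd_norm_lt X ⟨X₀, hX₀⟩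
  have hYlt : ‖Y‖ < 1 := dvd_norm_lt Y ⟨Y₀, hY₀⟩
  have hZ1 : ‖Z‖ = 1 := by
    rcases hone with h' | h' | h'
    · exact absurd h' (ne_of_lt hXlt)
    · exact absurd h' (ne_of_lt hYlt)
    · exact h'
  have h7 : (7 : ℤ_[7]) ≠ 0 := by norm_num
  have h2 : 49 * (3 * X₀ ^ 3 + 8 * Y₀ ^ 3) + 3 * Z ^ 3 = 0 := by
    have : (7 : ℤ_[7]) * (49 * (3 * X₀ ^ 3 + 8 * Y₀ ^ 3) + 3 * Z ^ 3) = 7 * 0 := by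
      rw [mul_zero, ← h, hX₀, hY₀]; ring
    exact mul_left_cancel₀ h7 this
  have h3 := congrArg (PadicInt.toZMod : ℤ_[7] →+* ZMod 7) h2
  push_cast [map_add, map_mul, map_pow, map_ofNat, map_zero] at h3
  have key2 : ∀ a b c : ZMod 7,
      49 * (3 * a ^ 3 + 8 * b ^ 3) + 3 * c ^ 3 = 0 → c = 0 := by decide
  have hc := key2 _ _ _ h3
  obtain ⟨Z₀, hZ₀⟩ := toZMod_zero_dvd Z hc
  have : ‖Z‖ < 1 := dvd_norm_lt Z ⟨Z₀, hZ₀⟩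
  rw [hZ1] at this
  exact lt_irrefl _ this

private lemma aux2 (x y z : ℚ_[7]) (hx : ‖x‖ ≤ 1) (hy : ‖y‖ ≤ 1) (hz : ‖z‖ ≤ 1)
    (hone : ‖x‖ = 1 ∨ ‖y‖ = 1 ∨ ‖z‖ = 1)
    (h : 3 * x ^ 3 + 8 * y ^ 3 + 21 * z ^ 3 = 0) : False := by
  set X : ℤ_[7] := ⟨x, hx⟩
  set Y : ℤ_[7] := ⟨y, hy⟩
  set Z : ℤ_[7] := ⟨z, hz⟩
  apply aux X Y Z
  · simpa [X, Y, Z, PadicInt.norm_def] using hone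
  · apply Subtype.ext
    push_cast
    have e3 : ((3 : ℤ_[7]) : ℚ_[7]) = 3 := PadicInt.coe_natCast 3
    have e8 : ((8 : ℤ_[7]) : ℚ_[7]) = 8 := PadicInt.coe_natCast 8
    have e21 : ((21 : ℤ_[7]) : ℚ_[7]) = 21 := PadicInt.coe_natCast 21
    simpa [X, Y, Z, e3, e8, e21] using h

theorem no_Q7_points_3_8_21 :
    ¬ ∃ x y z : ℚ_[7], (x, y, z) ≠ (0, 0, 0) ∧
      3 * x ^ 3 + 8 * y ^ 3 + 21 * z ^ 3 = 0 := by
  rintro ⟨x, y, z, hne, h⟩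
  have hne' : ¬ (x = 0 ∧ y = 0 ∧ z = 0) := by
    rintro ⟨rfl, rfl, rfl⟩; exact hne rfl
  obtain ⟨c, hcmem, hcx, hcy, hcz⟩ :
      ∃ c : ℚ_[7], (c = x ∨ c = y ∨ c = z) ∧ ‖x‖ ≤ ‖c‖ ∧ ‖y‖ ≤ ‖c‖ ∧ ‖z‖ ≤ ‖c‖ := by
    rcases le_total ‖x‖ ‖y‖ with h1 | h1 <;> rcases le_total ‖y‖ ‖z‖ with h2 | h2 <;>
      rcases le_total ‖x‖ ‖z‖ with h3 | h3
    all_goals first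
      | exact ⟨x, Or.inl rfl, le_refl _, by linarith, by linarith⟩
      | exact ⟨y, Or.inr (Or.inl rfl), by linarith, le_refl _, by linarith⟩
      | exact ⟨z, Or.inr (Or.inr rfl), by linarith, by linarith, le_refl _⟩
  have hc0 : c ≠ 0 := by
    intro h0
    apply hne'
    rw [h0, norm_zero] at hcx hcy hcz
    exact ⟨norm_le_zero_iff.mp hcx, norm_le_zero_iff.mp hcy, norm_le_zero_iff.mp hcz⟩
  have hcn : ‖c‖ ≠ 0 := norm_ne_zero_iff.mpr hc0
  apply aux2 (x / c) (y / c) (z / c)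
  · rw [norm_div]; exact div_le_one_of_le₀ hcx (norm_nonneg c)
  · rw [norm_div]; exact div_le_one_of_le₀ hcy (norm_nonneg c)
  · rw [norm_div]; exact div_le_one_of_le₀ hcz (norm_nonneg c)
  · rcases hcmem with rfl | rfl | rfl
    · left; rw [norm_div, div_self hcn]
    · right; left; rw [norm_div, div_self hcn]
    · right; right; rw [norm_div, div_self hcn]
  · field_simp
    linear_combination h
end
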